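/- Let p be an odd prime, ζ = e^{2πi/(p-1)}, and define Υ(ζ) = ∏_{1 ≤ i < j ≤ (p-1)/2} (ζ^{2j} - ζ^{2i}). Then Υ(ζ)² = (-1)^{(p-1)(p-3)/8 + (p-3)(p+1)/4} · ((p-1)/2)^{(p-1)/2}. -/

import Mathlib

open Finset Polynomial

lemma aux_nodal (m : ℕ) (hm : 0 < m) (ω : ℂ) (hω : IsPrimitiveRoot ω m) :
    ∏ j ∈ Icc 1 m, (X - C (ω ^ j)) = X ^ m - 1 := by
  have h0 : (X : ℂ[X]) ^ m - 1 = ∏ i ∈ range m, (X - C (ω ^ i)) := by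
    simpa using X_pow_sub_C_eq_prod hω hm (one_pow m)
  rw [h0, range_eq_Ico, prod_eq_prod_Ico_succ_bot hm, ← Finset.Ico_add_one_right_eq_Icc,
    prod_Ico_succ_top hm, hω.pow_eq_one, pow_zero, mul_comm]

lemma aux_inner (m : ℕ) (hm : 0 < m) (ω : ℂ) (hω : IsPrimitiveRoot ω m)
    {j : ℕ} (hj : j ∈ Icc 1 m) :
    ∏ i ∈ (Icc 1 m).erase j, (ω ^ j - ω ^ i) = (m : ℂ) * ω ^ (j * (m - 1)) := by
  have h1 := Lagrange.eval_nodal_derivative_eval_node_eq (v := fun i : ℕ => ω ^ i) hj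
  rw [Lagrange.eval_nodal] at h1
  rw [← h1]
  rw [Lagrange.nodal, aux_nodal m hm ω hω]
  simp [derivative_sub, derivative_one, derivative_X_pow, ← pow_mul]

lemma key (m : ℕ) (hm : 0 < m) (ω : ℂ) (hω : IsPrimitiveRoot ω m) :
    (∏ j ∈ Icc 1 m, ∏ i ∈ Ico 1 j, (ω ^ j - ω ^ i)) ^ 2
      = (-1 : ℂ) ^ (m * (m - 1) / 2 + (m - 1) * (m + 1)) * (m : ℂ) ^ m := by
  set S := Icc 1 m with hS
  have hfilt : ∀ j ∈ S, Ico 1 j = S.filter (· < j) := by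
    intro j hj
    simp only [hS, mem_Icc] at hj
    ext i; simp only [mem_Ico, mem_filter, hS, mem_Icc]; omega
  set P := ∏ j ∈ S, ∏ i ∈ Ico 1 j, (ω ^ j - ω ^ i) with hP
  -- the full off-diagonal product
  have hsplit : ∀ j ∈ S, S.erase j = (S.filter (· < j)) ∪ (S.filter (j < ·)) := by
    intro j hj
    ext i; simp only [mem_erase, mem_union, mem_filter]
    constructor
    · rintro ⟨h1, h2⟩; rcases Nat.lt_or_gt_of_ne h1 with h | h
      · exact Or.inl ⟨h2, h⟩
      · exact Or.inr ⟨h2, h⟩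
    · rintro (⟨h1, h2⟩ | ⟨h1, h2⟩) <;> exact ⟨by omega, h1⟩
  have hD : ∏ j ∈ S, ∏ i ∈ S.erase j, (ω ^ j - ω ^ i)
      = P * ∏ j ∈ S, ∏ i ∈ S.filter (j < ·), (ω ^ j - ω ^ i) := by
    rw [← prod_mul_distrib]
    refine prod_congr rfl fun j hj => ?_
    rw [hsplit j hj, prod_union, hfilt j hj]
    · rw [disjoint_filter]; intro x _ h; omega
  have hswap : ∏ j ∈ S, ∏ i ∈ S.filter (j < ·), (ω ^ j - ω ^ i)
      = ∏ i ∈ S, ∏ j ∈ S.filter (· < i), (ω ^ j - ω ^ i) := by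
    refine prod_comm' fun x y => ?_
    simp only [mem_filter]; tauto
  have hN : ∑ j ∈ S, #(S.filter (· < j)) = m * (m - 1) / 2 := by
    have : ∀ j ∈ S, #(S.filter (· < j)) = j - 1 := by
      intro j hj; rw [← hfilt j hj, Nat.card_Ico]
    rw [sum_congr rfl this, hS, ← Finset.Ico_add_one_right_eq_Icc, sum_Ico_eq_sum_range]
    simp only [Nat.add_sub_cancel_left, Nat.succ_sub_one, Nat.add_one_sub_one]
    rw [Finset.sum_range_id]
  have hneg : ∏ i ∈ S, ∏ j ∈ S.filter (· < i), (ω ^ j - ω ^ i)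
      = (-1 : ℂ) ^ (m * (m - 1) / 2) * P := by
    rw [hP]
    rw [← hN]
    rw [← prod_pow_eq_pow_sum, ← prod_mul_distrib]
    refine prod_congr rfl fun j hj => ?_
    rw [hfilt j hj, ← prod_const, ← prod_mul_distrib]
    exact prod_congr rfl fun i _ => by ring
  -- inner product value
  have hDval : ∏ j ∈ S, ∏ i ∈ S.erase j, (ω ^ j - ω ^ i)
      = (m : ℂ) ^ m * ((∏ j ∈ S, ω ^ j) ^ (m - 1)) := by
    rw [prod_congr rfl fun j hj => aux_inner m hm ω hω hj, prod_mul_distrib,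
      prod_const, hS, Nat.card_Icc, Nat.add_sub_cancel, ← prod_pow]
    congr 1
    exact prod_congr rfl fun j _ => by rw [pow_mul]
  have hprod_roots : ∏ j ∈ S, ω ^ j = (-1 : ℂ) ^ (m + 1) := by
    have := congrArg (Polynomial.eval 0) (aux_nodal m hm ω hω)
    simp only [eval_prod, eval_sub, eval_X, eval_pow, eval_C, eval_one,
      zero_sub, zero_pow hm.ne'] at this
    have hcard : #S = m := by simp [hS]
    have h2 : ∏ j ∈ S, (-(ω ^ j)) = (-1 : ℂ) ^ #S * ∏ j ∈ S, ω ^ j := by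
      rw [← prod_const, ← prod_mul_distrib]
      exact prod_congr rfl fun j _ => by ring
    rw [h2, hcard] at this
    calc ∏ j ∈ S, ω ^ j = ((-1 : ℂ) ^ m * (-1 : ℂ) ^ m) * ∏ j ∈ S, ω ^ j := by
          rw [← mul_pow, neg_mul_neg, one_mul, one_pow, one_mul]
      _ = (-1 : ℂ) ^ m * ((-1 : ℂ) ^ m * ∏ j ∈ S, ω ^ j) := by ring
      _ = (-1 : ℂ) ^ m * (-1) := by rw [this]
      _ = (-1 : ℂ) ^ (m + 1) := by rw [pow_succ]
  -- assemble
  have hPP : P ^ 2 = (-1 : ℂ) ^ (m * (m - 1) / 2) *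
      (∏ j ∈ S, ∏ i ∈ S.erase j, (ω ^ j - ω ^ i)) := by
    have hE : ((-1 : ℂ) ^ (m * (m - 1) / 2)) * ((-1 : ℂ) ^ (m * (m - 1) / 2)) = 1 := by
      rw [← pow_add]; exact Even.neg_one_pow ⟨_, rfl⟩
    rw [hD, hswap, hneg]
    linear_combination (-(P ^ 2)) * hE
  rw [hPP, hDval, hprod_roots, ← pow_mul, Nat.mul_comm (m + 1) (m - 1), pow_add]
  ring
theorem stmt_7 (p : ℕ) (hp : p.Prime) (hodd : Odd p) :
    (∏ j ∈ Finset.Icc 1 ((p - 1) / 2), ∏ i ∈ Finset.Ico 1 j,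
      (Complex.exp (2 * (Real.pi : ℂ) * Complex.I / ((p : ℂ) - 1)) ^ (2 * j)
        - Complex.exp (2 * (Real.pi : ℂ) * Complex.I / ((p : ℂ) - 1)) ^ (2 * i))) ^ 2
      = (-1 : ℂ) ^ ((p - 1) * (p - 3) / 8 + (p - 3) * (p + 1) / 4)
          * (((p : ℂ) - 1) / 2) ^ ((p - 1) / 2) := by
  have hne2 : p ≠ 2 := by rintro rfl; rw [Nat.odd_iff] at hodd; omega
  have h3 : 3 ≤ p := by have := hp.two_le; omega
  set m := (p - 1) / 2 with hm'
  have hm : 0 < m := by omega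
  have hp2m : p = 2 * m + 1 := by
    obtain ⟨k, hk⟩ := hodd; omega
  set ω : ℂ := Complex.exp (2 * Real.pi * Complex.I / (m : ℂ)) with hω'
  have hω : IsPrimitiveRoot ω m := Complex.isPrimitiveRoot_exp m hm.ne'
  have hpc : (p : ℂ) = 2 * (m : ℂ) + 1 := by rw [hp2m]; push_cast; ring
  have hbase : Complex.exp (2 * (Real.pi : ℂ) * Complex.I / ((p : ℂ) - 1)) ^ 2 = ω := by
    rw [hω', ← Complex.exp_nat_mul]
    congr 1
    rw [hpc]
    have hm0 : (m : ℂ) ≠ 0 := Nat.cast_ne_zero.mpr hm.ne'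
    field_simp
    ring
  have ee : (p - 1) * (p - 3) / 8 + (p - 3) * (p + 1) / 4
      = m * (m - 1) / 2 + (m - 1) * (m + 1) := by
    have e1 : (p - 1) * (p - 3) = 4 * (m * (m - 1)) := by
      rw [show p - 1 = 2 * m from by omega, show p - 3 = 2 * (m - 1) from by omega]; ring
    have e2 : (p - 3) * (p + 1) = 4 * ((m - 1) * (m + 1)) := by
      rw [show p - 3 = 2 * (m - 1) from by omega, show p + 1 = 2 * (m + 1) from by omega]; ring
    rw [e1, e2]
    generalize m * (m - 1) = a
    generalize (m - 1) * (m + 1) = b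
    omega
  have hrb : ((p : ℂ) - 1) / 2 = (m : ℂ) := by rw [hpc]; ring
  rw [ee, hrb]
  simp only [pow_mul, hbase]
  exact key m hm ω hω
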